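/- The linear map F : ℝ⁷ → ℝ³ given by F(x₁,x₂,x₃,y₁,y₂,y₃,z) = ((x₂ - y₃)/√2, y₂, z) is surjective with ker F = span{∂/∂x₁, ∂/∂y₁, ∂/∂x₂ + ∂/∂y₃, ∂/∂x₃}; moreover φ(∂/∂x₁) = -∂/∂y₁ and φ(∂/∂y₁) = ∂/∂x₁ (so D₁ = span{∂/∂x₁, ∂/∂y₁} satisfies φ(D₁) = D₁), and D₂ = span{∂/∂x₂ + ∂/∂y₃, ∂/∂x₃} is slant with angle π/4: with respect to the standard Euclidean inner product on ℝ⁷, for every nonzero W ∈ D₂ the orthogonal projection P(φW) of φ(W) onto D₂ satisfies ‖P(φW)‖ = cos(π/4)·‖φ(W)‖. -/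

import Mathlib

open Real

/-- The tensor `φ` of the standard Sasakian structure on `ℝ⁷` (coordinates ordered
`(x₁,x₂,x₃,y₁,y₂,y₃,z)`): it sends `(X₁,X₂,X₃,Y₁,Y₂,Y₃,Z)` to `(Y₁,Y₂,Y₃,-X₁,-X₂,-X₃,0)`. -/
noncomputable def phi7 (v : EuclideanSpace ℝ (Fin 7)) : EuclideanSpace ℝ (Fin 7) :=
  WithLp.toLp 2 ![v 3, v 4, v 5, -v 0, -v 1, -v 2, 0]

/-- The submersion `F : ℝ⁷ → ℝ³`, `F(x₁,x₂,x₃,y₁,y₂,y₃,z) = ((x₂ - y₃)/√2, y₂, z)`. -/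
noncomputable def F7 : EuclideanSpace ℝ (Fin 7) →ₗ[ℝ] (Fin 3 → ℝ) where
  toFun v := ![(v 1 - v 5) / Real.sqrt 2, v 4, v 6]
  map_add' u v := by
    funext i; fin_cases i <;> simp <;> ring
  map_smul' c v := by
    funext i; fin_cases i <;> simp <;> ring

/-- `∂/∂x₁`. -/
noncomputable def W₁ : EuclideanSpace ℝ (Fin 7) := WithLp.toLp 2 ![1, 0, 0, 0, 0, 0, 0]

/-- `∂/∂y₁`. -/
noncomputable def W₂ : EuclideanSpace ℝ (Fin 7) := WithLp.toLp 2 ![0, 0, 0, 1, 0, 0, 0]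

/-- `∂/∂x₂ + ∂/∂y₃`. -/
noncomputable def W₃ : EuclideanSpace ℝ (Fin 7) := WithLp.toLp 2 ![0, 1, 0, 0, 0, 1, 0]

/-- `∂/∂x₃`. -/
noncomputable def W₄ : EuclideanSpace ℝ (Fin 7) := WithLp.toLp 2 ![0, 0, 1, 0, 0, 0, 0]

/-- `D₁ = span{∂/∂x₁, ∂/∂y₁}`. -/
noncomputable def D₁ : Submodule ℝ (EuclideanSpace ℝ (Fin 7)) := Submodule.span ℝ {W₁, W₂}

/-- `D₂ = span{∂/∂x₂ + ∂/∂y₃, ∂/∂x₃}`. -/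
noncomputable def D₂ : Submodule ℝ (EuclideanSpace ℝ (Fin 7)) := Submodule.span ℝ {W₃, W₄}

@[simp] lemma vec7_zero (a b c d e f g : ℝ) : (![a,b,c,d,e,f,g] : Fin 7 → ℝ) 0 = a := rfl
@[simp] lemma vec7_one (a b c d e f g : ℝ) : (![a,b,c,d,e,f,g] : Fin 7 → ℝ) 1 = b := rfl
@[simp] lemma vec7_two (a b c d e f g : ℝ) : (![a,b,c,d,e,f,g] : Fin 7 → ℝ) 2 = c := rfl
@[simp] lemma vec7_three (a b c d e f g : ℝ) : (![a,b,c,d,e,f,g] : Fin 7 → ℝ) 3 = d := rfl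
@[simp] lemma vec7_four (a b c d e f g : ℝ) : (![a,b,c,d,e,f,g] : Fin 7 → ℝ) 4 = e := rfl
@[simp] lemma vec7_five (a b c d e f g : ℝ) : (![a,b,c,d,e,f,g] : Fin 7 → ℝ) 5 = f := rfl
@[simp] lemma vec7_six (a b c d e f g : ℝ) : (![a,b,c,d,e,f,g] : Fin 7 → ℝ) 6 = g := rfl

/-- `F : ℝ⁷ → ℝ³`, `F(x₁,x₂,x₃,y₁,y₂,y₃,z) = ((x₂-y₃)/√2, y₂, z)`, is
surjective with `ker F = span{∂/∂x₁, ∂/∂y₁, ∂/∂x₂ + ∂/∂y₃, ∂/∂x₃}`; moreover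
`φ(∂/∂x₁) = -∂/∂y₁` and `φ(∂/∂y₁) = ∂/∂x₁` (so `D₁ = span{∂/∂x₁, ∂/∂y₁}` satisfies
`φ(D₁) = D₁`), and `D₂ = span{∂/∂x₂ + ∂/∂y₃, ∂/∂x₃}` is slant with angle `π/4`: for every
nonzero `W ∈ D₂` the orthogonal projection `P(φW)` of `φ(W)` onto `D₂` satisfies
`‖P(φW)‖ = cos(π/4)·‖φ(W)‖`. -/
theorem F7_semi_slant :
    Function.Surjective F7 ∧
    LinearMap.ker F7 = Submodule.span ℝ {W₁, W₂, W₃, W₄} ∧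
    phi7 W₁ = -W₂ ∧ phi7 W₂ = W₁ ∧
    phi7 '' (D₁ : Set (EuclideanSpace ℝ (Fin 7))) = (D₁ : Set (EuclideanSpace ℝ (Fin 7))) ∧
    (∀ W ∈ D₂, W ≠ 0 →
      ‖(D₂.orthogonalProjectionOnto (phi7 W) : EuclideanSpace ℝ (Fin 7))‖ =
        Real.cos (π / 4) * ‖phi7 W‖) := by
  have s2 : Real.sqrt 2 ≠ 0 := by positivity
  refine ⟨?_, ?_, ?_, ?_, ?_, ?_⟩
  · intro w
    refine ⟨(WithLp.toLp 2 ![0, w 0 * Real.sqrt 2, 0, 0, w 1, 0, w 2] : EuclideanSpace ℝ (Fin 7)), ?_⟩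
    funext i
    fin_cases i <;> simp [F7] <;> field_simp
  · apply le_antisymm
    · intro v hv
      have h0 := congrFun (LinearMap.mem_ker.1 hv) 0
      have h1 := congrFun (LinearMap.mem_ker.1 hv) 1
      have h2 := congrFun (LinearMap.mem_ker.1 hv) 2
      simp [F7, div_eq_zero_iff, s2, sub_eq_zero] at h0 h1 h2
      have hv' : v = v 0 • W₁ + v 3 • W₂ + v 1 • W₃ + v 2 • W₄ := by
        ext i
        fin_cases i <;> simp [W₁, W₂, W₃, W₄, h0, h1, h2]
      rw [hv']
      have m : ∀ x ∈ ({W₁, W₂, W₃, W₄} : Set (EuclideanSpace ℝ (Fin 7))),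
          x ∈ Submodule.span ℝ ({W₁, W₂, W₃, W₄} : Set (EuclideanSpace ℝ (Fin 7))) :=
        fun x hx => Submodule.subset_span hx
      exact Submodule.add_mem _ (Submodule.add_mem _ (Submodule.add_mem _
        (Submodule.smul_mem _ _ (m _ (by simp))) (Submodule.smul_mem _ _ (m _ (by simp))))
        (Submodule.smul_mem _ _ (m _ (by simp)))) (Submodule.smul_mem _ _ (m _ (by simp)))
    · rw [Submodule.span_le]
      rintro x (rfl | rfl | rfl | rfl) <;>
        (simp only [SetLike.mem_coe, LinearMap.mem_ker]; funext i;
         fin_cases i <;> simp [F7, W₁, W₂, W₃, W₄])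
  · ext i; fin_cases i <;> simp [phi7, W₁, W₂]
  · ext i; fin_cases i <;> simp [phi7, W₁, W₂]
  · ext x
    constructor
    · rintro ⟨y, hy, rfl⟩
      rw [SetLike.mem_coe, D₁, Submodule.mem_span_pair] at hy
      obtain ⟨a, b, rfl⟩ := hy
      rw [SetLike.mem_coe, D₁, Submodule.mem_span_pair]
      exact ⟨b, -a, by ext i; fin_cases i <;> simp [phi7, W₁, W₂] <;> ring⟩
    · intro hx
      rw [SetLike.mem_coe, D₁, Submodule.mem_span_pair] at hx
      obtain ⟨a, b, rfl⟩ := hx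
      refine ⟨-b • W₁ + a • W₂, ?_, ?_⟩
      · rw [SetLike.mem_coe, D₁, Submodule.mem_span_pair]
        exact ⟨-b, a, rfl⟩
      · ext i; fin_cases i <;> simp [phi7, W₁, W₂] <;> ring
  · intro W hW _
    rw [D₂, Submodule.mem_span_pair] at hW
    obtain ⟨a, b, rfl⟩ := hW
    have hphi : phi7 (a • W₃ + b • W₄) =
        (WithLp.toLp 2 ![0, 0, a, 0, -a, -b, 0] : EuclideanSpace ℝ (Fin 7)) := by
      ext i; fin_cases i <;> simp [phi7, W₃, W₄]
    have hv : ((-b/2) • W₃ + a • W₄ : EuclideanSpace ℝ (Fin 7)) =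
        (WithLp.toLp 2 ![0, -b/2, a, 0, 0, -b/2, 0] : EuclideanSpace ℝ (Fin 7)) := by
      ext i; fin_cases i <;> simp [W₃, W₄]
    have hproj : (D₂.orthogonalProjectionOnto (phi7 (a • W₃ + b • W₄)) :
        EuclideanSpace ℝ (Fin 7)) = (-b/2) • W₃ + a • W₄ := by
      rw [← Submodule.starProjection_apply]
      apply Submodule.eq_starProjection_of_mem_of_inner_eq_zero
      · exact Submodule.mem_span_pair.2 ⟨-b/2, a, rfl⟩
      · intro w hw
        rw [D₂, Submodule.mem_span_pair] at hw
        obtain ⟨c, d, rfl⟩ := hw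
        rw [hphi, hv]
        simp [PiLp.inner_apply, Fin.sum_univ_seven, W₃, W₄]
        ring
    rw [hproj, hv, hphi, EuclideanSpace.norm_eq, EuclideanSpace.norm_eq,
      Real.cos_pi_div_four]
    simp only [Fin.sum_univ_seven, Real.norm_eq_abs, sq_abs, vec7_zero, vec7_one,
      vec7_two, vec7_three, vec7_four, vec7_five, vec7_six]
    rw [show (0:ℝ)^2 + (-b/2)^2 + a^2 + 0^2 + 0^2 + (-b/2)^2 + 0^2 =
        (Real.sqrt 2 / 2 * Real.sqrt (0^2 + 0^2 + a^2 + 0^2 + (-a)^2 + (-b)^2 + 0^2))^2 by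
      have e1 : Real.sqrt 2 ^ 2 = 2 := Real.sq_sqrt (by norm_num)
      have e2 := Real.sq_sqrt (show (0:ℝ) ≤ 0^2 + 0^2 + a^2 + 0^2 + (-a)^2 + (-b)^2 + 0^2
        by positivity)
      simp only [mul_pow, div_pow, e1, e2]
      ring]
    exact Real.sqrt_sq (by positivity)
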